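/- Let (a_s)_{s≥1} be a real sequence converging to μ ∈ ℝ, let μ* ∈ ℝ with Δ := μ* − μ, let ε₁ > 0 and ε₂ > 0 satisfy Δ > ε₁ + ε₂, and let f : ℕ → ℝ satisfy f(n) ≥ 1 for all n. Then there exists N₁ ∈ ℕ such that for all n ≥ 1: ∑_{s=1}^n 𝟙{ a_s + √(2 · log f(n) / s) ≥ μ* − ε₁ } ≤ N₁ + 2 · log f(n) / (Δ − ε₁ − ε₂)². -/

import Mathlib

open Finset Filter

open Classical in
theorem counting_bound_for_convergent_sequence_plus_ucb_bonus
    (a : ℕ → ℝ) (μ μstar : ℝ)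
    (ha : Tendsto a atTop (nhds μ))
    (ε₁ ε₂ : ℝ) (hε₁ : 0 < ε₁) (hε₂ : 0 < ε₂)
    (hgap : μstar - μ > ε₁ + ε₂)
    (f : ℕ → ℝ) (hf : ∀ n : ℕ, 1 ≤ f n) :
    ∃ N₁ : ℕ, ∀ n : ℕ, 1 ≤ n →
      (∑ s ∈ Finset.Icc 1 n,
          if a s + Real.sqrt (2 * Real.log (f n) / (s : ℝ)) ≥ μstar - ε₁ then (1 : ℝ) else 0)
        ≤ (N₁ : ℝ) + 2 * Real.log (f n) / (μstar - μ - ε₁ - ε₂) ^ 2 := by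
  set c : ℝ := μstar - μ - ε₁ - ε₂ with hc
  have hcpos : 0 < c := by simp only [hc]; linarith
  obtain ⟨N₀, hN₀⟩ := Metric.tendsto_atTop.mp ha ε₂ hε₂
  refine ⟨N₀ + 1, fun n hn => ?_⟩
  have hlog : 0 ≤ Real.log (f n) := Real.log_nonneg (hf n)
  set M : ℝ := 2 * Real.log (f n) / c ^ 2 with hM
  have hMnn : 0 ≤ M := by positivity
  set p : ℕ → Prop := fun s => a s + Real.sqrt (2 * Real.log (f n) / (s : ℝ)) ≥ μstar - ε₁
  have hsum : (∑ s ∈ Finset.Icc 1 n,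
      if p s then (1 : ℝ) else 0) = ((Finset.Icc 1 n).filter p).card := by
    rw [Finset.sum_boole]
  rw [hsum]
  set S := (Finset.Icc 1 n).filter p with hS
  -- key: for s in S with N₀ ≤ s, (s : ℝ) ≤ M
  have key : ∀ s ∈ S, N₀ ≤ s → (s : ℝ) ≤ M := by
    intro s hs hsN
    simp only [hS, Finset.mem_filter, Finset.mem_Icc] at hs
    obtain ⟨⟨hs1, _⟩, hps⟩ := hs
    have hspos : (0 : ℝ) < s := by exact_mod_cast hs1
    have has : a s < μ + ε₂ := by
      have := hN₀ s hsN
      rw [Real.dist_eq] at this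
      have := abs_lt.mp this
      linarith [this.2]
    have hx : (0 : ℝ) ≤ 2 * Real.log (f n) / (s : ℝ) := by positivity
    have hsqrt : c < Real.sqrt (2 * Real.log (f n) / (s : ℝ)) := by
      have : μstar - ε₁ - a s ≤ Real.sqrt (2 * Real.log (f n) / (s : ℝ)) := by linarith
      have h2 : c < μstar - ε₁ - a s := by simp only [hc]; linarith
      linarith
    have hsq : c ^ 2 ≤ 2 * Real.log (f n) / (s : ℝ) := by
      have := Real.sq_sqrt hx
      nlinarith [Real.sqrt_nonneg (2 * Real.log (f n) / (s : ℝ))]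
    rw [le_div_iff₀ hspos] at hsq
    rw [hM, le_div_iff₀ (by positivity)]
    nlinarith
  -- split S
  have hsplit := Finset.card_filter_add_card_filter_not
    (s := S) (p := fun s => s < N₀)
  have hcard1 : (S.filter (fun s => s < N₀)).card ≤ N₀ := by
    have hsub : S.filter (fun s => s < N₀) ⊆ Finset.range N₀ := by
      intro s hs
      simp only [Finset.mem_filter] at hs
      exact Finset.mem_range.mpr hs.2
    simpa using Finset.card_le_card hsub
  have hcard2 : ((S.filter (fun s => ¬ s < N₀)).card : ℝ) ≤ M + 1 := by
    have hsub : S.filter (fun s => ¬ s < N₀) ⊆ Finset.range (⌊M⌋₊ + 1) := by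
      intro s hs
      simp only [Finset.mem_filter, not_lt] at hs
      have := key s hs.1 hs.2
      have : s ≤ ⌊M⌋₊ := Nat.le_floor this
      exact Finset.mem_range.mpr (by omega)
    have := Finset.card_le_card hsub
    simp only [Finset.card_range] at this
    have hfloor : (⌊M⌋₊ : ℝ) ≤ M := Nat.floor_le hMnn
    calc ((S.filter (fun s => ¬ s < N₀)).card : ℝ) ≤ (⌊M⌋₊ + 1 : ℕ) := by exact_mod_cast this
      _ ≤ M + 1 := by push_cast; linarith
  have : (S.card : ℝ) ≤ N₀ + (M + 1) := by
    rw [← hsplit]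
    push_cast
    have h1 : ((S.filter (fun s => s < N₀)).card : ℝ) ≤ N₀ := by exact_mod_cast hcard1
    linarith
  push_cast
  simp only [hM] at this
  linarith
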